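/- Let R be a commutative Noetherian ring and P a finitely generated projective R-module such that P ⊕ R ≅ R^{n+1} where n > Krull dimension of R. Then P ≅ R^n. -/

import Mathlib

open Order

variable {R : Type} [CommRing R]

lemma finite_minimalPrimes [IsNoetherianRing R] (I : Ideal R) : I.minimalPrimes.Finite := by
  rw [Ideal.minimalPrimes_eq_comap]
  exact (minimalPrimes.finite_of_isNoetherianRing (R ⧸ I)).image _

/-- Avoidance lemma for a finite set of pairwise incomparable primes. -/
lemma exists_add_mul_not_mem (S : Finset (Ideal R)) (hS : ∀ p ∈ S, p.IsPrime)
    (hincomp : ∀ p ∈ S, ∀ q ∈ S, p ≤ q → p = q) (b : R) (hb : ∀ p ∈ S, b ∉ p) (a : R) :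
    ∃ x : R, ∀ p ∈ S, a + x * b ∉ p := by
  classical
  -- for each p pick y p not in p but in all other members of S
  have hy : ∀ p ∈ S, ∃ y, y ∉ p ∧ ∀ q ∈ S, q ≠ p → y ∈ q := by
    intro p hp
    have hc : ∀ q ∈ S.erase p, ∃ c, c ∈ q ∧ c ∉ p := by
      intro q hq
      have hqS := Finset.mem_of_mem_erase hq
      have hne : q ≠ p := Finset.ne_of_mem_erase hq
      by_contra hcon
      push_neg at hcon
      exact hne (hincomp q hqS p hp (fun c hc => hcon c hc))
    choose c hc1 hc2 using hc
    refine ⟨∏ q ∈ (S.erase p).attach, c q.1 q.2, ?_, ?_⟩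
    · intro hmem
      haveI hP := hS p hp
      obtain ⟨q, _, hq⟩ := Ideal.IsPrime.prod_mem_iff.mp hmem
      exact hc2 _ _ hq
    · intro q hqS hqp
      have hq' : q ∈ S.erase p := Finset.mem_erase.mpr ⟨hqp, hqS⟩
      have hmem : (⟨q, hq'⟩ : {x // x ∈ S.erase p}) ∈ (S.erase p).attach := Finset.mem_attach _ _
      rw [← Finset.prod_erase_mul _ _ hmem]
      exact Ideal.mul_mem_left _ _ (hc1 q hq')
  choose y hy1 hy2 using hy
  refine ⟨∑ p ∈ S.attach.filter (fun p => a ∈ p.1), y p.1 p.2, ?_⟩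
  intro p hp hmem
  set T := S.attach.filter (fun q : {x // x ∈ S} => a ∈ q.1) with hT
  have hsum : ∑ q ∈ T.erase ⟨p, hp⟩, y q.1 q.2 ∈ p := by
    refine Ideal.sum_mem _ (fun q hq => ?_)
    have h1 : q ≠ ⟨p, hp⟩ := Finset.ne_of_mem_erase hq
    exact hy2 q.1 q.2 p hp (fun h => h1 (Subtype.ext h.symm))
  by_cases ha : a ∈ p
  · have hpT : (⟨p, hp⟩ : {x // x ∈ S}) ∈ T := Finset.mem_filter.mpr ⟨Finset.mem_attach _ _, ha⟩
    have hsplit : ∑ q ∈ T, y q.1 q.2 = y p hp + ∑ q ∈ T.erase ⟨p, hp⟩, y q.1 q.2 :=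
      (Finset.add_sum_erase _ _ hpT).symm
    rw [hsplit] at hmem
    -- a + (y p hp + s) * b ∈ p with a ∈ p, s ∈ p  ⇒  y p hp * b ∈ p
    have : y p hp * b ∈ p := by
      have h2 : a + (y p hp + ∑ q ∈ T.erase ⟨p, hp⟩, y q.1 q.2) * b
          = (y p hp * b) + (a + (∑ q ∈ T.erase ⟨p, hp⟩, y q.1 q.2) * b) := by ring
      rw [h2] at hmem
      have := Ideal.add_mem p ha (Ideal.mul_mem_right b _ hsum)
      simpa using Ideal.sub_mem p hmem this
    rcases (hS p hp).mem_or_mem this with h | h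
    · exact hy1 p hp h
    · exact hb p hp h
  · have hpT : (⟨p, hp⟩ : {x // x ∈ S}) ∉ T := fun h => ha (Finset.mem_filter.mp h).2
    have herase : T.erase ⟨p, hp⟩ = T := Finset.erase_eq_of_notMem hpT
    rw [herase] at hsum
    have : a ∈ p := by
      have := Ideal.sub_mem p hmem (Ideal.mul_mem_right b _ hsum)
      simpa using this
    exact ha this

lemma bass_step [IsNoetherianRing R] (b : R) (a : ℕ → R) (k : ℕ) :
    ∃ x : ℕ → R, ∀ (p : PrimeSpectrum R),
      p.asIdeal ∈ (Ideal.span ((fun i => a i + x i * b) '' Set.Iio k)).minimalPrimes →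
      b ∉ p.asIdeal → (k : ℕ∞) ≤ height p := by
  classical
  induction k with
  | zero => exact ⟨0, fun p _ _ => by simp⟩
  | succ k ih =>
    obtain ⟨x, hx⟩ := ih
    set f : ℕ → R := fun i => a i + x i * b with hf
    set I : Ideal R := Ideal.span (f '' Set.Iio k) with hI
    -- the finitely many minimal primes over I avoiding b
    have hfin : {p ∈ I.minimalPrimes | b ∉ p}.Finite :=
      (finite_minimalPrimes I).subset (fun p hp => hp.1)
    set S : Finset (Ideal R) := hfin.toFinset with hSdef
    have hSmem : ∀ p, p ∈ S ↔ p ∈ I.minimalPrimes ∧ b ∉ p := by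
      intro p; simp [hSdef]
    obtain ⟨c, hc⟩ := exists_add_mul_not_mem S
      (fun p hp => ((hSmem p).mp hp).1.1.1)
      (fun p hp q hq hle =>
        le_antisymm hle (((hSmem q).mp hq).1.2 ((hSmem p).mp hp).1.1 hle))
      b (fun p hp => ((hSmem p).mp hp).2) (a k)
    refine ⟨Function.update x k c, ?_⟩
    have hupd : ∀ i < k, Function.update x k c i = x i := by
      intro i hi; exact Function.update_of_ne (by omega) _ _
    have himg : (fun i => a i + Function.update x k c i * b) '' Set.Iio (k + 1)
        = insert (a k + c * b) (f '' Set.Iio k) := by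
      have h1 : Set.Iio (k+1) = insert k (Set.Iio k) := by
        ext i; simp [Nat.lt_succ_iff_lt_or_eq]
      rw [h1, Set.image_insert_eq]
      congr 1
      · simp
      · apply Set.image_congr
        intro i hi
        simp only [Set.mem_Iio] at hi
        rw [hupd i hi]
    rw [himg]
    intro q hq hbq
    haveI hqprime : q.asIdeal.IsPrime := hq.1.1
    -- q contains I
    have hIq : I ≤ q.asIdeal := le_trans (Ideal.span_mono (Set.subset_insert _ _)) hq.1.2
    obtain ⟨pI, hpI, hple⟩ := Ideal.exists_minimalPrimes_le hIq
    haveI hpprime : pI.IsPrime := hpI.1.1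
    set p : PrimeSpectrum R := ⟨pI, hpprime⟩ with hpdef
    have hbp : b ∉ pI := fun hbp => hbq (hple hbp)
    have hk : (k : ℕ∞) ≤ height p := hx p hpI hbp
    have hpS : pI ∈ S := (hSmem pI).mpr ⟨hpI, hbp⟩
    have hnotmem : a k + c * b ∉ pI := hc pI hpS
    have hmemq : a k + c * b ∈ q.asIdeal := hq.1.2 (Ideal.subset_span (Set.mem_insert _ _))
    have hlt : p < q := by
      refine lt_of_le_of_ne hple ?_
      intro h
      exact hnotmem (by rw [show pI = q.asIdeal from congrArg PrimeSpectrum.asIdeal h]; exact hmemq)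
    by_cases htop : height p = ⊤
    · have h2 : height p ≤ height q := height_mono hlt.le
      rw [htop, top_le_iff] at h2
      rw [h2]; exact le_top
    · have hlt2 : height p < height q := height_strictMono hlt (lt_top_iff_ne_top.mpr htop)
      have : (k : ℕ∞) < height q := lt_of_le_of_lt hk hlt2
      have := Order.add_one_le_of_lt this
      calc ((k + 1 : ℕ) : ℕ∞) = (k : ℕ∞) + 1 := by push_cast; ring
        _ ≤ height q := this

lemma bass_main [IsNoetherianRing R] (n : ℕ) (hn : ringKrullDim R < n) (b : R) (a : ℕ → R)
    (h : Ideal.span (insert b (a '' Set.Iio n)) = ⊤) :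
    ∃ x : ℕ → R, Ideal.span ((fun i => a i + x i * b) '' Set.Iio n) = ⊤ := by
  obtain ⟨x, hx⟩ := bass_step b a n
  refine ⟨x, ?_⟩
  by_contra hI
  obtain ⟨m, hm, hIm⟩ := Ideal.exists_le_maximal _ hI
  haveI := hm.isPrime
  obtain ⟨pI, hp, hpm⟩ := Ideal.exists_minimalPrimes_le hIm
  haveI hprime : pI.IsPrime := hp.1.1
  by_cases hb : b ∈ pI
  · have hle : Ideal.span (insert b (a '' Set.Iio n)) ≤ pI := by
      rw [Ideal.span_le]
      rintro y (rfl | ⟨i, hi, rfl⟩)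
      · exact hb
      · have hmem : a i + x i * b ∈ pI := hp.1.2 (Ideal.subset_span ⟨i, hi, rfl⟩)
        simpa using pI.sub_mem hmem (pI.mul_mem_left (x i) hb)
    rw [h] at hle
    exact hprime.ne_top (top_le_iff.mp hle)
  · have h1 := hx ⟨pI, hprime⟩ hp hb
    have h2 := Order.height_le_krullDim (⟨pI, hprime⟩ : PrimeSpectrum R)
    have h3 : (n : WithBot ℕ∞) ≤ ringKrullDim R := by
      refine le_trans ?_ h2
      exact_mod_cast WithBot.coe_le_coe.mpr h1
    exact absurd hn (not_lt.mpr h3)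

section LA

variable {R : Type} [CommRing R]

/-- `Fin.snoc` as a linear equivalence `(Fin n → R) × R ≃ R^{n+1}`. -/
def snocEquiv (n : ℕ) : ((Fin n → R) × R) ≃ₗ[R] (Fin (n + 1) → R) where
  toFun p := Fin.snoc p.1 p.2
  invFun f := (fun i => f i.castSucc, f (Fin.last n))
  map_add' p q := by
    ext i
    refine Fin.lastCases ?_ (fun i => ?_) i <;> simp
  map_smul' c p := by
    ext i
    refine Fin.lastCases ?_ (fun i => ?_) i <;> simp
  left_inv p := by simp
  right_inv f := by
    ext i
    refine Fin.lastCases ?_ (fun i => ?_) i <;> simp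

/-- Shear on the first factor. -/
def shearFst {M N : Type*} [AddCommGroup M] [Module R M] [AddCommGroup N] [Module R N]
    (g : N →ₗ[R] M) : (M × N) ≃ₗ[R] (M × N) where
  toFun p := (p.1 + g p.2, p.2)
  invFun p := (p.1 - g p.2, p.2)
  map_add' p q := by ext <;> simp <;> abel
  map_smul' c p := by ext <;> simp
  left_inv p := by ext <;> simp
  right_inv p := by ext <;> simp

/-- Shear on the second factor. -/
def shearSnd {M N : Type*} [AddCommGroup M] [Module R M] [AddCommGroup N] [Module R N]
    (c : M →ₗ[R] N) : (M × N) ≃ₗ[R] (M × N) where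
  toFun p := (p.1, p.2 + c p.1)
  invFun p := (p.1, p.2 - c p.1)
  map_add' p q := by ext <;> simp <;> abel
  map_smul' c p := by ext <;> simp
  left_inv p := by ext <;> simp
  right_inv p := by ext <;> simp

/-- `M ≃ (M × R) / span {(0,1)}`. -/
noncomputable def quotProd (M : Type*) [AddCommGroup M] [Module R M] :
    ((M × R) ⧸ (Submodule.span R {((0 : M), (1 : R))})) ≃ₗ[R] M :=
  (Submodule.quotEquivOfEq _ _ (by
    ext ⟨m, r⟩
    simp only [Submodule.mem_span_singleton, LinearMap.mem_ker, LinearMap.fst_apply,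
      Prod.smul_mk, smul_zero, smul_eq_mul, mul_one, Prod.mk.injEq]
    constructor
    · rintro ⟨c, hc, -⟩; exact hc.symm
    · rintro rfl; exact ⟨r, rfl, rfl⟩)).trans
  ((LinearMap.fst R M R).quotKerEquivOfSurjective fun m => ⟨(m, 0), rfl⟩)

end LA

/-- Bass cancellation for corank-1 stably free modules: if `R` is a commutative
Noetherian ring and `P` is a finitely generated projective `R`-module with
`P ⊕ R ≅ R^{n+1}` where `n` exceeds the Krull dimension of `R`, then `P ≅ Rⁿ`. -/
theorem free_of_stablyFree_corank_one (R : Type) [CommRing R] [IsNoetherianRing R]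
    (P : Type) [AddCommGroup P] [Module R P] [Module.Finite R P] [Module.Projective R P]
    (n : ℕ) (h : Nonempty ((P × R) ≃ₗ[R] (Fin (n + 1) → R)))
    (hgt : ringKrullDim R < n) :
    Nonempty (P ≃ₗ[R] (Fin n → R)) := by
  classical
  obtain ⟨e⟩ := h
  -- work in `(Fin n → R) × R`
  set h0 : (P × R) ≃ₗ[R] ((Fin n → R) × R) := e.trans (snocEquiv n).symm with hh0
  set w : (Fin n → R) × R := h0 (0, 1) with hw
  set b : R := w.2 with hb
  -- unimodularity of `w`
  set φ : ((Fin n → R) × R) →ₗ[R] R := (LinearMap.snd R P R).comp h0.symm.toLinearMap with hφ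
  have hφw : φ w = 1 := by
    rw [hw, hφ]
    simp
  have hunim : Ideal.span (insert b (Set.range w.1)) = ⊤ := by
    rw [Ideal.eq_top_iff_one]
    set ψ : (Fin n → R) →ₗ[R] R := φ.comp (LinearMap.inl R (Fin n → R) R) with hψdef
    have hsplit : w = (w.1, 0) + (0, w.2) := by simp
    have hsnd : ((0 : Fin n → R), w.2) = w.2 • ((0 : Fin n → R), (1 : R)) := by simp
    have key : (1 : R) = (∑ i, w.1 i • ψ (fun j => if i = j then 1 else 0)) + b * φ (0, 1) := by
      conv_lhs => rw [← hφw, hsplit]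
      rw [map_add, hsnd, map_smul, smul_eq_mul]
      congr 1
      have hfst : φ (w.1, (0 : R)) = ψ w.1 := by simp [hψdef]
      rw [hfst, LinearMap.pi_apply_eq_sum_univ ψ w.1]
    rw [key]
    refine Ideal.add_mem _ (Ideal.sum_mem _ fun i _ => ?_) ?_
    · rw [smul_eq_mul]
      exact Ideal.mul_mem_right _ _ (Ideal.subset_span (Set.mem_insert_of_mem _ ⟨i, rfl⟩))
    · exact Ideal.mul_mem_right _ _ (Ideal.subset_span (Set.mem_insert _ _))
  -- apply Bass's stable range theorem
  set a' : ℕ → R := fun i => if hi : i < n then w.1 ⟨i, hi⟩ else 0 with ha'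
  have himg : a' '' Set.Iio n = Set.range w.1 := by
    ext r
    constructor
    · rintro ⟨i, hi, rfl⟩
      have hi' : i < n := hi
      refine ⟨⟨i, hi'⟩, ?_⟩
      show w.1 ⟨i, hi'⟩ = a' i
      simp only [ha']
      rw [dif_pos hi']
    · rintro ⟨i, rfl⟩
      refine ⟨i.1, i.2, ?_⟩
      show a' i.1 = w.1 i
      simp only [ha']
      rw [dif_pos i.2, Fin.eta]
  obtain ⟨x, hx⟩ := bass_main n hgt b a' (by rwa [himg])
  set v' : Fin n → R := fun i => w.1 i + x i.1 * b with hv'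
  have himg2 : (fun i => a' i + x i * b) '' Set.Iio n = Set.range v' := by
    ext r
    constructor
    · rintro ⟨i, hi, rfl⟩
      have hi' : i < n := hi
      refine ⟨⟨i, hi'⟩, ?_⟩
      show w.1 ⟨i, hi'⟩ + x i * b = a' i + x i * b
      simp only [ha']
      rw [dif_pos hi']
    · rintro ⟨i, rfl⟩
      refine ⟨i.1, i.2, ?_⟩
      show a' i.1 + x i.1 * b = w.1 i + x i.1 * b
      simp only [ha']
      rw [dif_pos i.2, Fin.eta]
  rw [himg2] at hx
  obtain ⟨d, hd⟩ := Ideal.mem_span_range_iff_exists_fun.mp (hx ▸ Submodule.mem_top :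
    (1 : R) ∈ Ideal.span (Set.range v'))
  -- build the automorphism straightening `w` to `(0, 1)`
  set xf : Fin n → R := fun i => x i.1 with hxf
  set G1 : ((Fin n → R) × R) ≃ₗ[R] ((Fin n → R) × R) :=
    shearFst (LinearMap.toSpanSingleton R (Fin n → R) xf) with hG1
  set c : (Fin n → R) →ₗ[R] R := (1 - b) • (∑ i, d i • LinearMap.proj i) with hc
  set G2 : ((Fin n → R) × R) ≃ₗ[R] ((Fin n → R) × R) := shearSnd c with hG2
  set G3 : ((Fin n → R) × R) ≃ₗ[R] ((Fin n → R) × R) :=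
    shearFst (LinearMap.toSpanSingleton R (Fin n → R) (-v')) with hG3
  set h1 : (P × R) ≃ₗ[R] ((Fin n → R) × R) := ((h0.trans G1).trans G2).trans G3 with hh1
  have hG1w : G1 w = (v', b) := by
    rw [hG1]
    show (w.1 + w.2 • xf, w.2) = (v', b)
    refine Prod.ext (funext fun i => ?_) rfl
    show w.1 i + w.2 * x i.1 = w.1 i + x i.1 * w.2
    ring
  have hcv' : c v' = 1 - b := by
    rw [hc]
    simp only [LinearMap.smul_apply, LinearMap.coe_sum, Finset.sum_apply,
      LinearMap.smul_apply, LinearMap.proj_apply, smul_eq_mul]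
    rw [hd, mul_one]
  have hG2v : G2 (v', b) = (v', 1) := by
    rw [hG2]
    show (v', b + c v') = (v', 1)
    rw [hcv']
    exact Prod.ext rfl (by ring)
  have hG3v : G3 (v', 1) = (0, 1) := by
    rw [hG3]
    show (v' + (1 : R) • (-v'), (1 : R)) = (0, 1)
    simp
  have hone : h1 ((0 : P), (1 : R)) = ((0 : Fin n → R), (1 : R)) := by
    rw [hh1]
    simp only [LinearEquiv.trans_apply]
    rw [← hw, hG1w, hG2v, hG3v]
  have hmap : Submodule.map (h1 : (P × R) →ₗ[R] ((Fin n → R) × R)) (Submodule.span R {((0 : P), (1 : R))})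
      = Submodule.span R {((0 : Fin n → R), (1 : R))} := by
    rw [Submodule.map_span, Set.image_singleton, LinearEquiv.coe_coe, hone]
  exact ⟨((quotProd P).symm.trans
    (Submodule.Quotient.equiv _ _ h1 hmap)).trans (quotProd (Fin n → R))⟩
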